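/- Let w ∈ V_ℂ satisfy P(w)z = (z|w)w for all z (e.g. w in the minimal orbit 𝕏). Then for every k ≥ 1 the Bessel operator acts on powers of the linear form by 𝓑_z (z|w)^k = k(λ + k − 1)(z|w)^{k−1} w. -/

import Mathlib

/-- The ℂ-bilinear trace form `B(x,y) = ∑ᵢ xᵢ yᵢ` on the complexified Jordan algebra. -/
noncomputable def bformC (n : ℕ) (x y : Fin n → ℂ) : ℂ := ∑ i, x i * y i

/-- The quadratic representation `P(x) = 2 L(x)² − L(x²)` of a complex Jordan product. -/
noncomputable def quadRepC (n : ℕ)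
    (mul : (Fin n → ℂ) →ₗ[ℂ] (Fin n → ℂ) →ₗ[ℂ] (Fin n → ℂ)) (x : Fin n → ℂ) :
    (Fin n → ℂ) →ₗ[ℂ] (Fin n → ℂ) :=
  2 • ((mul x).comp (mul x)) - mul (mul x x)

/-- The polarized quadratic representation `P(x,y) = ½(P(x+y) − P(x) − P(y))`. -/
noncomputable def quadRepPolC (n : ℕ)
    (mul : (Fin n → ℂ) →ₗ[ℂ] (Fin n → ℂ) →ₗ[ℂ] (Fin n → ℂ)) (a b : Fin n → ℂ) :
    (Fin n → ℂ) →ₗ[ℂ] (Fin n → ℂ) :=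
  (1 / 2 : ℂ) • (quadRepC n mul (a + b) - quadRepC n mul a - quadRepC n mul b)

/-- The holomorphic Bessel operator
`𝓑 u(z) = ∑_{α,β} ∂²u/∂z_α∂z_β P(e_α,e_β)z + λ ∑_α ∂u/∂z_α e_α`, computed in the
standard (self-dual) basis. -/
noncomputable def besselOpC (n : ℕ)
    (mul : (Fin n → ℂ) →ₗ[ℂ] (Fin n → ℂ) →ₗ[ℂ] (Fin n → ℂ)) (l : ℂ)
    (u : (Fin n → ℂ) → ℂ) (z : Fin n → ℂ) : Fin n → ℂ :=
  (∑ α : Fin n, ∑ β : Fin n,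
      iteratedFDeriv ℂ 2 u z ![(Pi.single α 1 : Fin n → ℂ), (Pi.single β 1 : Fin n → ℂ)] •
        quadRepPolC n mul ((Pi.single α 1 : Fin n → ℂ)) ((Pi.single β 1 : Fin n → ℂ)) z)
    + l • (∑ α : Fin n, fderiv ℂ u z ((Pi.single α 1 : Fin n → ℂ)) • (Pi.single α 1 : Fin n → ℂ))

/-- Polarization: `P(a,b) z = a(bz) + b(az) − (ab)z`. -/
theorem quadRepPolC_apply (n : ℕ)
    (mul : (Fin n → ℂ) →ₗ[ℂ] (Fin n → ℂ) →ₗ[ℂ] (Fin n → ℂ))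
    (hcomm : ∀ a b, mul a b = mul b a) (a b v : Fin n → ℂ) :
    quadRepPolC n mul a b v = mul a (mul b v) + mul b (mul a v) - mul (mul a b) v := by
  simp only [quadRepPolC, quadRepC, LinearMap.smul_apply, LinearMap.sub_apply,
    LinearMap.add_apply, LinearMap.comp_apply, map_add, LinearMap.add_apply, two_smul]
  rw [hcomm b a]
  module

theorem scalar_aux (l t : ℂ) (k : ℕ) (hk : 1 ≤ k) :
    (k:ℂ) * ((((k-1:ℕ)):ℂ) * t^(k-1-1)) * t + l * ((k:ℂ) * t^(k-1))
      = (k:ℂ) * (l + (k:ℂ) - 1) * t^(k-1) := by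
  obtain ⟨m, rfl⟩ : ∃ m, k = m + 1 := ⟨k-1, (Nat.succ_pred_eq_of_pos hk).symm⟩
  simp only [Nat.add_sub_cancel]
  cases m with
  | zero => push_cast; ring
  | succ m' =>
    simp only [Nat.add_sub_cancel]
    push_cast
    rw [pow_succ]
    ring

/-- If `w` satisfies `P(w)z = (z|w)w` for all `z` (e.g. `w` in the minimal orbit `𝕏`),
then `𝓑_z (z|w)^k = k(λ + k − 1)(z|w)^{k−1} w` for all `k ≥ 1`. -/
theorem stmt_12 (n : ℕ)
    (mul : (Fin n → ℂ) →ₗ[ℂ] (Fin n → ℂ) →ₗ[ℂ] (Fin n → ℂ))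
    (hcomm : ∀ a b, mul a b = mul b a)
    (l : ℂ) (w : Fin n → ℂ)
    (hw : ∀ z : Fin n → ℂ, quadRepC n mul w z = bformC n z w • w)
    (k : ℕ) (hk : 1 ≤ k) :
    ∀ z : Fin n → ℂ,
      besselOpC n mul l (fun v => bformC n v w ^ k) z
        = ((k : ℂ) * (l + (k : ℂ) - 1)) • (bformC n z w ^ (k - 1) • w) := by
  intro z
  classical
  set L : (Fin n → ℂ) →L[ℂ] ℂ := ∑ i : Fin n, (w i) • (ContinuousLinearMap.proj i) with hLdef
  have hLapp : ∀ v, L v = ∑ i, w i * v i := by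
    intro v
    simp [hLdef, ContinuousLinearMap.sum_apply, ContinuousLinearMap.smul_apply,
      ContinuousLinearMap.proj_apply, smul_eq_mul]
  have hbf : ∀ v, bformC n v w = L v := by
    intro v; simp [bformC, hLapp, mul_comm]
  have hLe : ∀ α : Fin n, L (Pi.single α 1) = w α := by
    intro α
    simp [hLapp, Pi.single_apply, mul_ite, Finset.sum_ite_eq']
  have hu : (fun v => bformC n v w ^ k) = fun v => (L v) ^ k := by
    funext v; rw [hbf]
  -- derivatives
  have hd : ∀ y, HasFDerivAt (fun v => (L v)^k)
      (((k:ℂ) * (L y)^(k-1)) • (L : (Fin n → ℂ) →L[ℂ] ℂ)) y :=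
    fun y => (hasDerivAt_pow k (L y)).comp_hasFDerivAt y L.hasFDerivAt
  have hg : (fderiv ℂ fun v => (L v)^k)
      = fun y => ((k:ℂ) * (L y)^(k-1)) • (L : (Fin n → ℂ) →L[ℂ] ℂ) :=
    funext fun y => (hd y).fderiv
  have hc : HasFDerivAt (fun y => (k:ℂ) * (L y)^(k-1))
      ((((k:ℂ) * ((((k-1:ℕ)):ℂ) * (L z)^(k-1-1)))) • (L : (Fin n → ℂ) →L[ℂ] ℂ)) z :=
    (((hasDerivAt_pow (k-1) (L z)).const_mul (k:ℂ))).comp_hasFDerivAt z L.hasFDerivAt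
  have hd2 : HasFDerivAt (fun y => ((k:ℂ) * (L y)^(k-1)) • (L : (Fin n → ℂ) →L[ℂ] ℂ))
      ((((k:ℂ) * ((((k-1:ℕ)):ℂ) * (L z)^(k-1-1))) • (L : (Fin n → ℂ) →L[ℂ] ℂ)).smulRight L) z := by
    have h := hc.smul (hasFDerivAt_const (L : (Fin n → ℂ) →L[ℂ] ℂ) z)
    simp only [smul_zero, zero_add] at h
    exact h
  set C : ℂ := (k:ℂ) * ((((k-1:ℕ)):ℂ) * (L z)^(k-1-1)) with hC
  have h2 : ∀ v₁ v₂ : Fin n → ℂ, iteratedFDeriv ℂ 2 (fun v => (L v)^k) z ![v₁, v₂]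
      = C * (L v₁ * L v₂) := by
    intro v₁ v₂
    rw [iteratedFDeriv_two_apply, hg, hd2.fderiv]
    simp [ContinuousLinearMap.smulRight_apply, smul_eq_mul]
    ring
  have h1 : ∀ v : Fin n → ℂ, fderiv ℂ (fun v => (L v)^k) z v
      = ((k:ℂ) * (L z)^(k-1)) * L v := by
    intro v; rw [hg]; simp
  -- basis expansion of w
  have hwsum : ∑ α : Fin n, w α • (Pi.single α 1 : Fin n → ℂ) = w := by
    have : ∀ α : Fin n, w α • (Pi.single α 1 : Fin n → ℂ) = Pi.single α (w α) := by
      intro α; funext i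
      simp [Pi.single_apply, mul_ite]
    simp only [this]
    exact Finset.univ_sum_single w
  -- the key bilinear sum
  have S1 : (∑ α : Fin n, ∑ β : Fin n, (w α * w β) •
      mul (Pi.single α 1) (mul (Pi.single β 1) z)) = mul w (mul w z) := by
    conv_rhs => rw [← hwsum]
    simp only [map_sum, LinearMap.sum_apply, map_smul, LinearMap.smul_apply, Finset.smul_sum,
      smul_smul]
    rw [Finset.sum_comm]
    exact Finset.sum_congr rfl fun α _ => Finset.sum_congr rfl fun β _ => by rw [mul_comm]
  have S1' : (∑ α : Fin n, ∑ β : Fin n, (w α * w β) •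
      mul (Pi.single β 1) (mul (Pi.single α 1) z)) = mul w (mul w z) := by
    conv_rhs => rw [← hwsum]
    simp only [map_sum, LinearMap.sum_apply, map_smul, LinearMap.smul_apply, Finset.smul_sum,
      smul_smul]
  have S2 : (∑ α : Fin n, ∑ β : Fin n, (w α * w β) •
      mul (mul (Pi.single α 1) (Pi.single β 1)) z) = mul (mul w w) z := by
    conv_rhs => rw [← hwsum]
    simp only [map_sum, LinearMap.sum_apply, map_smul, LinearMap.smul_apply, Finset.smul_sum,
      smul_smul]
    rw [Finset.sum_comm]
    refine Finset.sum_congr rfl fun α _ => Finset.sum_congr rfl fun β _ => ?_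
    rw [mul_comm (w β) (w α), hcomm (Pi.single β 1) (Pi.single α 1)]
  have hPw : (∑ α : Fin n, ∑ β : Fin n,
      (w α * w β) • quadRepPolC n mul (Pi.single α 1) (Pi.single β 1) z) = (L z) • w := by
    have e3 : (∑ α : Fin n, ∑ β : Fin n,
        (w α * w β) • quadRepPolC n mul (Pi.single α 1) (Pi.single β 1) z)
        = mul w (mul w z) + mul w (mul w z) - mul (mul w w) z := by
      simp only [quadRepPolC_apply n mul hcomm, smul_add, smul_sub,
        Finset.sum_add_distrib, Finset.sum_sub_distrib, S1, S1', S2]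
    have e4 : quadRepC n mul w z = mul w (mul w z) + mul w (mul w z) - mul (mul w w) z := by
      simp [quadRepC, two_smul, LinearMap.sub_apply, LinearMap.smul_apply, LinearMap.comp_apply,
        LinearMap.add_apply]
    rw [e3, ← e4, hw z, hbf]
  -- assemble
  have key : besselOpC n mul l (fun v => bformC n v w ^ k) z
      = (C * L z) • w + (l * ((k:ℂ) * (L z)^(k-1))) • w := by
    rw [besselOpC, hu]
    have t1 : (∑ α : Fin n, ∑ β : Fin n,
        iteratedFDeriv ℂ 2 (fun v => (L v)^k) z ![(Pi.single α 1 : Fin n → ℂ), (Pi.single β 1 : Fin n → ℂ)] •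
          quadRepPolC n mul (Pi.single α 1) (Pi.single β 1) z)
        = (C * L z) • w := by
      have : ∀ α β : Fin n,
          iteratedFDeriv ℂ 2 (fun v => (L v)^k) z ![(Pi.single α 1 : Fin n → ℂ), (Pi.single β 1 : Fin n → ℂ)] •
            quadRepPolC n mul (Pi.single α 1) (Pi.single β 1) z
          = C • ((w α * w β) • quadRepPolC n mul (Pi.single α 1) (Pi.single β 1) z) := by
        intro α β
        rw [h2, hLe, hLe, smul_smul]
      simp only [this]
      simp only [← Finset.smul_sum]
      rw [hPw, smul_smul]
    have t2 : l • (∑ α : Fin n, fderiv ℂ (fun v => (L v)^k) z (Pi.single α 1 : Fin n → ℂ) •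
        (Pi.single α 1 : Fin n → ℂ)) = (l * ((k:ℂ) * (L z)^(k-1))) • w := by
      have : ∀ α : Fin n, fderiv ℂ (fun v => (L v)^k) z (Pi.single α 1 : Fin n → ℂ) •
          (Pi.single α 1 : Fin n → ℂ)
          = ((k:ℂ) * (L z)^(k-1)) • (w α • (Pi.single α 1 : Fin n → ℂ)) := by
        intro α
        rw [h1, hLe, smul_smul]
      simp only [this]
      rw [← Finset.smul_sum, hwsum, smul_smul]
    rw [t1, t2]
  rw [key, hbf, ← add_smul, smul_smul]
  congr 1
  rw [hC]
  exact scalar_aux l (L z) k hk
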